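/- Let A be a (d+1)×(d+1) matrix whose column 0 consists of all 1's, and for 1 ≤ j ≤ d let Λ_j be the diagonal matrix formed from column j of A. Then for each degree N and each j, the diagonal matrix whose m-entry is Ā_{m, e_j} (the column of the N-th symmetric power Ā indexed by the multi-index (N−1, 0,…,1,…,0) with 1 in slot j) equals Γ(Λ_j). -/

import Mathlib

open MvPolynomial Matrix BigOperators

/-- Multi-indices of `d+1` entries with total degree `N`. -/
abbrev MIdx (d N : ℕ) := {m : Fin (d+1) → ℕ // ∑ i, m i = N}

instance (d N : ℕ) : Fintype (MIdx d N) :=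
  Fintype.subtype (Finset.Nat.antidiagonalTuple (d+1) N)
    (fun _ => Finset.Nat.mem_antidiagonalTuple)

/-- The `(m,n)` matrix element of the symmetric power of `A`:
the coefficient of `x^n` in `(Ax)^m`. -/
noncomputable def symPowEntry {R : Type} [CommSemiring R] {d : ℕ}
    (A : Matrix (Fin (d+1)) (Fin (d+1)) R) (m n : Fin (d+1) → ℕ) : R :=
  MvPolynomial.coeff (Finsupp.equivFunOnFinite.symm n)
    (∏ i, (∑ j, MvPolynomial.C (A i j) * MvPolynomial.X j) ^ m i)

/-- The `N`-th symmetric power of `A`, as a matrix indexed by multi-indices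
of total degree `N`. -/
noncomputable def symPow {R : Type} [CommSemiring R] (d N : ℕ)
    (A : Matrix (Fin (d+1)) (Fin (d+1)) R) : Matrix (MIdx d N) (MIdx d N) R :=
  fun m n => symPowEntry A m.1 n.1

/-- `Γ(g)_{mn}`: the coefficient of `x^n` in `(Σ_{μ,λ} g_{μλ} x_λ ∂_μ) x^m`. -/
noncomputable def gammaEntry {d : ℕ} (g : Matrix (Fin (d+1)) (Fin (d+1)) ℂ)
    (m n : Fin (d+1) → ℕ) : ℂ :=
  MvPolynomial.coeff (Finsupp.equivFunOnFinite.symm n)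
    (∑ μ, ∑ lam, MvPolynomial.C (g μ lam) *
      (MvPolynomial.X lam * MvPolynomial.pderiv μ
        (MvPolynomial.monomial (Finsupp.equivFunOnFinite.symm m) 1)))

/-- The degree-`N` generator `Γ(g)` of the symmetric representation. -/
noncomputable def gammaMat (d N : ℕ) (g : Matrix (Fin (d+1)) (Fin (d+1)) ℂ) :
    Matrix (MIdx d N) (MIdx d N) ℂ :=
  fun m n => gammaEntry g m.1 n.1

/-- The diagonal matrix `B` of multinomial coefficients of degree `N`. -/
noncomputable def multinomMat (d N : ℕ) : Matrix (MIdx d N) (MIdx d N) ℂ :=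
  Matrix.diagonal fun m => (Nat.multinomial Finset.univ m.1 : ℂ)

variable {d : ℕ}

noncomputable def Lf (A : Matrix (Fin (d+1)) (Fin (d+1)) ℂ) (i : Fin (d+1)) : MvPolynomial (Fin (d+1)) ℂ :=
  ∑ k, MvPolynomial.C (A i k) * MvPolynomial.X k

lemma eval_pt_L (A : Matrix (Fin (d+1)) (Fin (d+1)) ℂ) (hA : ∀ i, A i 0 = 1) (i : Fin (d+1)) :
    eval (Pi.single (0 : Fin (d+1)) (1:ℂ)) (Lf A i) = 1 := by
  simp [Lf, eval_sum, Pi.single_apply, mul_ite, hA i]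

lemma pderiv_L (A : Matrix (Fin (d+1)) (Fin (d+1)) ℂ) (j i : Fin (d+1)) :
    pderiv j (Lf A i) = MvPolynomial.C (A i j) := by
  simp [Lf, Pi.single_apply, mul_ite, Finset.sum_ite_eq]

lemma evalDeriv_prod (A : Matrix (Fin (d+1)) (Fin (d+1)) ℂ) (hA : ∀ i, A i 0 = 1)
    (j : Fin (d+1)) (m : Fin (d+1) → ℕ) (s : Finset (Fin (d+1))) :
    eval (Pi.single (0 : Fin (d+1)) (1:ℂ)) (pderiv j (∏ i ∈ s, Lf A i ^ m i))
      = ∑ i ∈ s, (m i : ℂ) * A i j := by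
  induction s using Finset.induction_on with
  | empty => simp [pderiv_one]
  | insert _ _ ha ih =>
    rw [Finset.prod_insert ha, pderiv_mul, map_add, _root_.map_mul, _root_.map_mul, pderiv_pow, pderiv_L,
      Finset.sum_insert ha, ← ih]
    simp [eval_pt_L A hA, mul_comm]

lemma prod_pt_zero (v : Fin (d+1) →₀ ℕ) {k : Fin (d+1)} (hk : k ≠ 0) (hv : v k ≠ 0) :
    (v.prod fun k e => (Pi.single (0:Fin (d+1)) (1:ℂ) : Fin (d+1) → ℂ) k ^ e) = (0:ℂ) := by
  refine Finset.prod_eq_zero (Finsupp.mem_support_iff.2 hv) ?_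
  simp only []
  rw [Pi.single_eq_of_ne hk, zero_pow hv]

lemma prod_pt_one (v : Fin (d+1) →₀ ℕ) (h : ∀ k, k ≠ 0 → v k = 0) :
    (v.prod fun k e => (Pi.single (0:Fin (d+1)) (1:ℂ) : Fin (d+1) → ℂ) k ^ e) = (1:ℂ) := by
  refine Finset.prod_eq_one fun k hk => ?_
  rcases eq_or_ne k 0 with rfl | hne
  · simp
  · exact absurd (h k hne) (Finsupp.mem_support_iff.1 hk)

lemma degree_eq_sum (u : Fin (d+1) →₀ ℕ) : u.degree = ∑ k, u k := by
  rw [Finsupp.degree]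
  exact Finset.sum_subset (Finset.subset_univ _)
    (fun k _ hk => Finsupp.notMem_support_iff.1 hk)

lemma eval_pderiv_eq_coeff (g : MvPolynomial (Fin (d+1)) ℂ) (N : ℕ) (hN : 1 ≤ N)
    (hg : g.IsHomogeneous N) (j : Fin (d+1)) (hj : j ≠ 0) :
    eval (Pi.single (0 : Fin (d+1)) (1:ℂ)) (pderiv j g)
      = coeff (Finsupp.single (0:Fin (d+1)) (N-1) + Finsupp.single j 1) g := by
  set n0 : Fin (d+1) →₀ ℕ := Finsupp.single (0:Fin (d+1)) (N-1) + Finsupp.single j 1 with hn0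
  have hn0j : n0 j = 1 := by simp [hn0, Finsupp.single_apply, hj, Ne.symm hj]
  conv_lhs => rw [g.as_sum]
  rw [map_sum, map_sum]
  simp only [pderiv_monomial, eval_monomial]
  rw [Finset.sum_eq_single n0]
  · rw [hn0j]
    have : (n0 - Finsupp.single j 1) = Finsupp.single (0:Fin (d+1)) (N-1) := by
      simp [hn0]
    rw [this, prod_pt_one]
    · ring
    · intro k hk; simp [Finsupp.single_apply, Ne.symm hk]
  · intro u hu hune
    by_cases hz : u j = 0
    · simp [hz]
    by_cases hs : ∀ k : Fin (d+1), k ≠ 0 → (u - Finsupp.single j 1 : Fin (d+1) →₀ ℕ) k = 0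
    · exfalso; apply hune
      have hud : u.degree = N := by
        rw [Finsupp.degree_eq_weight_one]; exact hg (Finsupp.mem_support_iff.1 hu)
      have huj : u j = 1 := by
        have := hs j hj
        simp [Finsupp.single_apply] at this
        omega
      have hok : ∀ k, k ≠ 0 → k ≠ j → u k = 0 := by
        intro k hk0 hkj
        have := hs k hk0
        simpa [Finsupp.single_apply, Ne.symm hkj] using this
      have hu0 : u 0 = N - 1 := by
        rw [degree_eq_sum] at hud
        have : ∑ k, u k = u 0 + u j + ∑ k ∈ (Finset.univ \ {0, j}), u k := by
          rw [← Finset.sum_sdiff (Finset.subset_univ {0, j}),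
            Finset.sum_pair (Ne.symm hj)]
          ring
        have hz2 : ∑ k ∈ (Finset.univ \ {0, j}), u k = 0 := by
          refine Finset.sum_eq_zero fun k hk => ?_
          simp only [Finset.mem_sdiff, Finset.mem_insert, Finset.mem_singleton] at hk
          exact hok k (fun h => hk.2 (Or.inl h)) (fun h => hk.2 (Or.inr h))
        omega
      ext k
      rcases eq_or_ne k 0 with rfl | hk0
      · simpa [hn0, Finsupp.single_apply, hj] using hu0
      rcases eq_or_ne k j with rfl | hkj
      · simpa [hn0, Finsupp.single_apply, hj, Ne.symm hj] using huj
      · simp [hn0, Finsupp.single_apply, Ne.symm hk0, Ne.symm hkj, hok k hk0 hkj]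
    · push_neg at hs
      obtain ⟨k, hk0, hk⟩ := hs
      rw [prod_pt_zero _ hk0 hk, mul_zero]
  · intro h
    rw [MvPolynomial.notMem_support_iff.1 h]
    simp

lemma symPow_col_eq (A : Matrix (Fin (d+1)) (Fin (d+1)) ℂ) (hA : ∀ i, A i 0 = 1)
    (j : Fin (d+1)) (hj : j ≠ 0) (N : ℕ) (hN : 1 ≤ N) (m : Fin (d+1) → ℕ)
    (hm : ∑ i, m i = N) :
    MvPolynomial.coeff
      (Finsupp.equivFunOnFinite.symm (Pi.single (0 : Fin (d+1)) (N-1) + Pi.single j 1))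
      (∏ i, (∑ k, MvPolynomial.C (A i k) * MvPolynomial.X k) ^ m i)
      = ∑ i, (m i : ℂ) * A i j := by
  have hidx : (Finsupp.equivFunOnFinite.symm
      (Pi.single (0 : Fin (d+1)) (N-1) + Pi.single j 1) : Fin (d+1) →₀ ℕ)
      = Finsupp.single (0:Fin (d+1)) (N-1) + Finsupp.single j 1 := by
    ext k
    simp only [Finsupp.coe_equivFunOnFinite_symm, Pi.add_apply, Finsupp.add_apply,
      Finsupp.single_apply, Pi.single_apply, eq_comm]
  have hhom : (∏ i, (Lf A i) ^ m i).IsHomogeneous N := by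
    rw [← hm]
    apply MvPolynomial.IsHomogeneous.prod
    intro i _
    have h1 : (Lf A i).IsHomogeneous 1 := by
      apply MvPolynomial.IsHomogeneous.sum
      intro k _
      exact MvPolynomial.isHomogeneous_C_mul_X _ _
    simpa using h1.pow (m i)
  have := eval_pderiv_eq_coeff (∏ i, (Lf A i) ^ m i) N hN hhom j hj
  rw [hidx]
  show MvPolynomial.coeff _ (∏ i, (Lf A i) ^ m i) = _
  rw [← this, evalDeriv_prod A hA j m Finset.univ]

lemma gamma_diag_eq (A : Matrix (Fin (d+1)) (Fin (d+1)) ℂ) (j : Fin (d+1))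
    (m n : Fin (d+1) → ℕ) :
    MvPolynomial.coeff (Finsupp.equivFunOnFinite.symm n)
      (∑ μ, ∑ lam, MvPolynomial.C ((Matrix.diagonal fun i => A i j) μ lam) *
        (MvPolynomial.X lam * MvPolynomial.pderiv μ
          (MvPolynomial.monomial (Finsupp.equivFunOnFinite.symm m) (1:ℂ))))
      = if m = n then ∑ i, (m i : ℂ) * A i j else 0 := by
  set m' : Fin (d+1) →₀ ℕ := Finsupp.equivFunOnFinite.symm m with hm'
  set n' : Fin (d+1) →₀ ℕ := Finsupp.equivFunOnFinite.symm n with hn'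
  have hm'app : ∀ k, m' k = m k := fun k => rfl
  have hsum : ∀ μ : Fin (d+1),
      (∑ lam, MvPolynomial.C ((Matrix.diagonal fun i => A i j) μ lam) *
        (MvPolynomial.X lam * MvPolynomial.pderiv μ (MvPolynomial.monomial m' (1:ℂ))))
      = MvPolynomial.monomial m' ((m μ : ℂ) * A μ j) := by
    intro μ
    rw [Finset.sum_eq_single μ]
    · rw [Matrix.diagonal_apply_eq, pderiv_monomial]
      by_cases h : m μ = 0
      · simp [hm'app μ, h]
      · rw [X, monomial_mul, one_mul, one_mul]
        have hadd : Finsupp.single μ 1 + (m' - Finsupp.single μ 1) = m' := by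
          ext k
          rcases eq_or_ne k μ with rfl | hk
          · simp only [Finsupp.add_apply, Finsupp.tsub_apply, Finsupp.single_apply, if_pos rfl, if_true]
            have h2 := hm'app k
            omega
          · simp [Finsupp.single_apply, Ne.symm hk]
        rw [hadd, C_mul_monomial, hm'app μ, mul_comm]
    · intro lam _ hlam
      rw [Matrix.diagonal_apply_ne' _ hlam, map_zero, zero_mul]
    · intro h; exact absurd (Finset.mem_univ μ) h
  rw [Finset.sum_congr rfl fun μ _ => hsum μ, coeff_sum]
  simp only [coeff_monomial]
  rcases eq_or_ne m n with rfl | hmn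
  · simp; exact fun h => absurd rfl h
  · have : m' ≠ n' := fun h => hmn (by
      funext k; have : m' k = n' k := by rw [h]
      exact this)
    simp [this, hmn]

/-- If column `0` of `A` is all `1`'s, then for `1 ≤ j ≤ d` the diagonal matrix
with `m`-entry `Ā_{m, (N−1)e_0 + e_j}` equals `Γ(Λ_j)`, where `Λ_j` is the
diagonal matrix from column `j` of `A`. -/
theorem columns_corollary (d N : ℕ) (hN : 1 ≤ N)
    (A : Matrix (Fin (d+1)) (Fin (d+1)) ℂ) (hA : ∀ i, A i 0 = 1)
    (j : Fin (d+1)) (hj : j ≠ 0) :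
    Matrix.diagonal (fun m : MIdx d N =>
        symPowEntry A m.1 (Pi.single (0 : Fin (d+1)) (N-1) + Pi.single j 1))
      = gammaMat d N (Matrix.diagonal fun i => A i j) := by
  ext m n
  rw [Matrix.diagonal_apply]
  show _ = gammaEntry _ m.1 n.1
  rw [gammaEntry, gamma_diag_eq A j m.1 n.1]
  by_cases h : m = n
  · rw [if_pos h, if_pos (congrArg Subtype.val h)]
    rw [symPowEntry]
    exact symPow_col_eq A hA j hj N hN m.1 m.2
  · rw [if_neg h, if_neg (fun he => h (Subtype.ext he))]
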